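/- Let (Ω, 𝓕, μ) be a probability space, n : ℕ, and x : Fin n → Ω → ℝ a family of random variables each in L²(μ). Let A₀ B₀ : Fin n → ℝ and A B : Fin n → Fin n → ℝ; define the drift a_p(ω) = A₀ p + ∑_{α} A p α * x α (ω) + (1/2) * ∑_{q} (B₀ q + ∑_{φ} B q φ * x φ (ω)) * B p q and the diffusion entry c_{ij}(ω) = (B₀ i + ∑_{φ} B i φ * x φ (ω)) * (B₀ j + ∑_{γ} B j γ * x γ (ω)); let m φ = ∫ x φ dμ and P φ γ = ∫ (x φ * x γ) dμ - m φ * m γ. Then for all i j : Fin n, ∫ (x i * a_j + x j * a_i + c_{ij}) dμ - m i * ∫ a_j dμ - m j * ∫ a_i dμ = ∑_{p} P i p * (A j p + (1/2) * ∑_{λ} B λ p * B j λ) + ∑_{p} P j p * (A i p + (1/2) * ∑_{λ} B λ p * B i λ) + B₀ i * B₀ j + ∑_{γ} B₀ i * B j γ * m γ + ∑_{φ} B₀ j * B i φ * m φ + ∑_{φ,γ} B i φ * B j γ * m φ * m γ + ∑_{p,q} B i p * B j q * P p q. (This identity is the probabilistic content of the conditional variance evolution, equation (8b) of Theorem 2: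 the left-hand side is the integrand of dP_{ij}/dt and the right-hand side is the stated closed form.) -/

import Mathlib

open MeasureTheory

/-- Equation (8b) of Theorem 2 (probabilistic content): the integrand of dP_{ij}/dt
equals the stated closed form. -/
theorem variance_evolution_identity {Ω : Type*} [MeasurableSpace Ω]
    (μ : Measure Ω) [IsProbabilityMeasure μ] (n : ℕ) (x : Fin n → Ω → ℝ)
    (hx : ∀ φ, MemLp (x φ) 2 μ)
    (A₀ B₀ : Fin n → ℝ) (A B : Fin n → Fin n → ℝ)
    (a : Fin n → Ω → ℝ)
    (ha : ∀ p ω, a p ω = A₀ p + (∑ α, A p α * x α ω) +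
      (1/2) * ∑ q, (B₀ q + ∑ φ, B q φ * x φ ω) * B p q)
    (c : Fin n → Fin n → Ω → ℝ)
    (hc : ∀ p q ω, c p q ω = (B₀ p + ∑ φ, B p φ * x φ ω) * (B₀ q + ∑ γ, B q γ * x γ ω))
    (m : Fin n → ℝ) (hm : ∀ φ, m φ = ∫ ω, x φ ω ∂μ)
    (P : Fin n → Fin n → ℝ)
    (hP : ∀ φ γ, P φ γ = (∫ ω, x φ ω * x γ ω ∂μ) - m φ * m γ)
    (i j : Fin n) :
    (∫ ω, (x i ω * a j ω + x j ω * a i ω + c i j ω) ∂μ) -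
        m i * (∫ ω, a j ω ∂μ) - m j * (∫ ω, a i ω ∂μ) =
      (∑ p, P i p * (A j p + (1/2) * ∑ lam, B lam p * B j lam)) +
        (∑ p, P j p * (A i p + (1/2) * ∑ lam, B lam p * B i lam)) +
        B₀ i * B₀ j + (∑ γ, B₀ i * B j γ * m γ) + (∑ φ, B₀ j * B i φ * m φ) +
        (∑ φ, ∑ γ, B i φ * B j γ * m φ * m γ) +
        ∑ p, ∑ q, B i p * B j q * P p q := by
  have hxi : ∀ φ, Integrable (x φ) μ := fun φ => (hx φ).integrable one_le_two
  have hxx : ∀ φ γ, Integrable (fun ω => x φ ω * x γ ω) μ := by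
    intro φ γ
    have h : MemLp (x φ • x γ) 1 μ :=
      (hx γ).smul (hx φ) (p := 2) (q := 2) (r := 1)
        (hpqr := ⟨by norm_num [ENNReal.inv_two_add_inv_two]⟩)
    exact memLp_one_iff_integrable.mp h
  -- canonical form of a
  set C : Fin n → ℝ := fun p => A₀ p + (1/2) * ∑ q, B₀ q * B p q with hCdef
  set D : Fin n → Fin n → ℝ := fun p α => A p α + (1/2) * ∑ q, B q α * B p q with hDdef
  have ha' : ∀ p ω, a p ω = C p + ∑ α, D p α * x α ω := by
    intro p ω
    rw [ha]
    have h1 : ∑ q, (B₀ q + ∑ φ, B q φ * x φ ω) * B p q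
        = (∑ q, B₀ q * B p q) + ∑ α, (∑ q, B q α * B p q) * x α ω := by
      simp only [add_mul, Finset.sum_mul, Finset.sum_add_distrib]
      rw [Finset.sum_comm]
      congr 1
      exact Finset.sum_congr rfl fun α _ => Finset.sum_congr rfl fun q _ => by ring
    rw [h1]
    have h2 : ∑ α, D p α * x α ω
        = (∑ α, A p α * x α ω) + 1/2 * ∑ α, (∑ q, B q α * B p q) * x α ω := by
      rw [Finset.mul_sum, ← Finset.sum_add_distrib]
      exact Finset.sum_congr rfl fun α _ => by simp only [hDdef]; ring
    rw [h2]
    simp only [hCdef]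
    ring
  -- pointwise form of x k * a p
  have hka : ∀ (k p : Fin n) (ω : Ω), x k ω * a p ω
      = C p * x k ω + ∑ α, D p α * (x k ω * x α ω) := by
    intro k p ω
    rw [ha', mul_add, Finset.mul_sum]
    exact congrArg₂ (· + ·) (mul_comm _ _)
      (Finset.sum_congr rfl fun α _ => by ring)
  -- pointwise form of c i j
  have hcc : ∀ ω, c i j ω = B₀ i * B₀ j + (∑ γ, B₀ i * B j γ * x γ ω) +
      (∑ φ, B₀ j * B i φ * x φ ω) +
      ∑ φ, ∑ γ, B i φ * B j γ * (x φ ω * x γ ω) := by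
    intro ω
    have hg : B₀ i * (∑ γ, B j γ * x γ ω) = ∑ γ, B₀ i * B j γ * x γ ω := by
      rw [Finset.mul_sum]; exact Finset.sum_congr rfl fun γ _ => by ring
    have hf : (∑ φ, B i φ * x φ ω) * B₀ j = ∑ φ, B₀ j * B i φ * x φ ω := by
      rw [Finset.sum_mul]; exact Finset.sum_congr rfl fun φ _ => by ring
    have hfg : (∑ φ, B i φ * x φ ω) * (∑ γ, B j γ * x γ ω)
        = ∑ φ, ∑ γ, B i φ * B j γ * (x φ ω * x γ ω) := by
      rw [Finset.sum_mul]
      refine Finset.sum_congr rfl fun φ _ => ?_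
      rw [Finset.mul_sum]
      exact Finset.sum_congr rfl fun γ _ => by ring
    rw [hc, add_mul, mul_add, mul_add, hg, hf, hfg]
    ring
  -- integrability
  have intA : ∀ p, Integrable (a p) μ := by
    intro p
    rw [show a p = fun ω => C p + ∑ α, D p α * x α ω from funext (ha' p)]
    exact (integrable_const _).add
      (integrable_finset_sum _ fun α _ => (hxi α).const_mul _)
  have intXA : ∀ k p, Integrable (fun ω => x k ω * a p ω) μ := by
    intro k p
    rw [show (fun ω => x k ω * a p ω)
        = fun ω => C p * x k ω + ∑ α, D p α * (x k ω * x α ω) from funext (hka k p)]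
    exact ((hxi k).const_mul _).add
      (integrable_finset_sum _ fun α _ => (hxx k α).const_mul _)
  have intC : Integrable (c i j) μ := by
    rw [show c i j = fun ω => B₀ i * B₀ j + (∑ γ, B₀ i * B j γ * x γ ω) +
        (∑ φ, B₀ j * B i φ * x φ ω) +
        ∑ φ, ∑ γ, B i φ * B j γ * (x φ ω * x γ ω) from funext hcc]
    exact (((integrable_const _).add
        (integrable_finset_sum _ fun γ _ => (hxi γ).const_mul _)).add
        (integrable_finset_sum _ fun φ _ => (hxi φ).const_mul _)).add
      (integrable_finset_sum _ fun φ _ =>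
        integrable_finset_sum _ fun γ _ => (hxx φ γ).const_mul _)
  -- integral of a p
  have ia : ∀ p, ∫ ω, a p ω ∂μ = C p + ∑ α, D p α * m α := by
    intro p
    rw [show (fun ω => a p ω) = fun ω => C p + ∑ α, D p α * x α ω from funext (ha' p)]
    rw [integral_add (integrable_const _)
        (integrable_finset_sum _ fun α _ => (hxi α).const_mul _),
      integral_const, integral_finset_sum _ fun α _ => (hxi α).const_mul _]
    simp only [integral_const_mul, ← hm, measure_univ, probReal_univ, ENNReal.toReal_one, one_smul]
  -- integral of x k * a p
  have ixa : ∀ k p, ∫ ω, x k ω * a p ω ∂μ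
      = C p * m k + ∑ α, D p α * ∫ ω, x k ω * x α ω ∂μ := by
    intro k p
    rw [show (fun ω => x k ω * a p ω)
        = fun ω => C p * x k ω + ∑ α, D p α * (x k ω * x α ω) from funext (hka k p)]
    rw [integral_add ((hxi k).const_mul _)
        (integrable_finset_sum _ fun α _ => (hxx k α).const_mul _),
      integral_const_mul, integral_finset_sum _ fun α _ => (hxx k α).const_mul _]
    simp only [integral_const_mul, ← hm]
  -- integral of c i j
  have ic : ∫ ω, c i j ω ∂μ = B₀ i * B₀ j + (∑ γ, B₀ i * B j γ * m γ) +
      (∑ φ, B₀ j * B i φ * m φ) +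
      ∑ φ, ∑ γ, B i φ * B j γ * ∫ ω, x φ ω * x γ ω ∂μ := by
    rw [show (fun ω => c i j ω) = fun ω => B₀ i * B₀ j + (∑ γ, B₀ i * B j γ * x γ ω) +
        (∑ φ, B₀ j * B i φ * x φ ω) +
        ∑ φ, ∑ γ, B i φ * B j γ * (x φ ω * x γ ω) from funext hcc]
    have I1 : Integrable (fun _ : Ω => B₀ i * B₀ j) μ := integrable_const _
    have I2 : Integrable (fun ω => ∑ γ, B₀ i * B j γ * x γ ω) μ :=
      integrable_finset_sum _ fun γ _ => (hxi γ).const_mul _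
    have I3 : Integrable (fun ω => ∑ φ, B₀ j * B i φ * x φ ω) μ :=
      integrable_finset_sum _ fun φ _ => (hxi φ).const_mul _
    have I4 : Integrable (fun ω => ∑ φ, ∑ γ, B i φ * B j γ * (x φ ω * x γ ω)) μ :=
      integrable_finset_sum _ fun φ _ =>
        integrable_finset_sum _ fun γ _ => (hxx φ γ).const_mul _
    have I12 : Integrable (fun ω => B₀ i * B₀ j + ∑ γ, B₀ i * B j γ * x γ ω) μ := I1.add I2
    have I123 : Integrable (fun ω => B₀ i * B₀ j + (∑ γ, B₀ i * B j γ * x γ ω) +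
        ∑ φ, B₀ j * B i φ * x φ ω) μ := I12.add I3
    rw [integral_add I123 I4, integral_add I12 I3,
      integral_add I1 I2, integral_const,
      integral_finset_sum _ fun γ _ => (hxi γ).const_mul _,
      integral_finset_sum _ fun φ _ => (hxi φ).const_mul _,
      integral_finset_sum _ (fun φ _ =>
        integrable_finset_sum _ fun γ _ => (hxx φ γ).const_mul _)]
    simp only [integral_const_mul, ← hm, measure_univ, probReal_univ, ENNReal.toReal_one, one_smul]
    congr 1
    refine Finset.sum_congr rfl fun φ _ => ?_
    rw [integral_finset_sum _ fun γ _ => (hxx φ γ).const_mul _]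
    simp only [integral_const_mul]
  -- split the main integral
  have J1 : Integrable (fun ω => x i ω * a j ω + x j ω * a i ω) μ :=
    (intXA i j).add (intXA j i)
  rw [integral_add J1 intC, integral_add (intXA i j) (intXA j i),
    ixa i j, ixa j i, ia i, ia j, ic]
  -- final algebra
  have L1 : (∑ α, D j α * ∫ ω, x i ω * x α ω ∂μ) - m i * (∑ α, D j α * m α)
      = ∑ p, P i p * (A j p + (1/2) * ∑ lam, B lam p * B j lam) := by
    rw [Finset.mul_sum, ← Finset.sum_sub_distrib]
    refine Finset.sum_congr rfl fun p _ => ?_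
    rw [hP]
    simp only [hDdef]
    ring
  have L2 : (∑ α, D i α * ∫ ω, x j ω * x α ω ∂μ) - m j * (∑ α, D i α * m α)
      = ∑ p, P j p * (A i p + (1/2) * ∑ lam, B lam p * B i lam) := by
    rw [Finset.mul_sum, ← Finset.sum_sub_distrib]
    refine Finset.sum_congr rfl fun p _ => ?_
    rw [hP]
    simp only [hDdef]
    ring
  have L3 : (∑ φ, ∑ γ, B i φ * B j γ * ∫ ω, x φ ω * x γ ω ∂μ)
      = (∑ φ, ∑ γ, B i φ * B j γ * m φ * m γ) + ∑ p, ∑ q, B i p * B j q * P p q := by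
    rw [← Finset.sum_add_distrib]
    refine Finset.sum_congr rfl fun φ _ => ?_
    rw [← Finset.sum_add_distrib]
    refine Finset.sum_congr rfl fun γ _ => ?_
    rw [hP]
    ring
  linear_combination L1 + L2 + L3
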